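/- Let β > 0, γ ∈ (1/2, 1) and a ∈ (0,1). For the preferential attachment kernel p(x,y) = β(min(x,y))^{−γ}(max(x,y))^{γ−1}, define f(x) = ∫_a^1 p(x,y) dy and g(x) = ∫_0^a p(x,y) dy for x ∈ [a,1]. Then ‖f‖_{L²([a,1])} ≤ (c₂/√(2γ−1))·a^{1/2−γ} with c₂ = β(1/γ + 1/(1−γ)), and ‖g‖_{L²([a,1])} ≤ (β(1 − a^{2γ−1})^{1/2}/((1−γ)√(2γ−1)))·a^{1−γ}. -/

import Mathlib

open MeasureTheory Real Set
open scoped ENNReal NNReal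

lemma int_Icc_rpow {a b r : ℝ} (hab : a ≤ b)
    (h : -1 < r ∨ r ≠ -1 ∧ (0 : ℝ) ∉ Set.uIcc a b) :
    ∫ x in Set.Icc a b, x ^ r = (b ^ (r + 1) - a ^ (r + 1)) / (r + 1) := by
  rw [MeasureTheory.integral_Icc_eq_integral_Ioc, ← intervalIntegral.integral_of_le hab,
    integral_rpow h]

lemma elp_helper {a : ℝ} (ha : 0 < a) (ha1 : a ≤ 1) (F : ℝ → ℝ) (C r B : ℝ)
    (hC : 0 ≤ C) (hB0 : 0 ≤ B)
    (hbound : ∀ x ∈ Set.Icc a 1, |F x| ≤ C * x ^ r)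
    (hB : ∫ x in Set.Icc a 1, x ^ (2 * r) ≤ B) :
    eLpNorm F 2 (volume.restrict (Set.Icc a 1)) ≤ ENNReal.ofReal (C * Real.sqrt B) := by
  have hmono : eLpNorm F 2 (volume.restrict (Set.Icc a 1)) ≤
      eLpNorm (fun x => C * x ^ r) 2 (volume.restrict (Set.Icc a 1)) := by
    refine eLpNorm_mono_ae ?_
    rw [MeasureTheory.ae_restrict_iff' measurableSet_Icc]
    filter_upwards with x hx
    have hx0 : (0:ℝ) ≤ x := le_trans ha.le hx.1
    rw [Real.norm_eq_abs, Real.norm_eq_abs,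
      abs_of_nonneg (by positivity : (0:ℝ) ≤ C * x ^ r)]
    exact hbound x hx
  refine hmono.trans ?_
  have hcont : ContinuousOn (fun x : ℝ => C ^ 2 * x ^ (2 * r)) (Set.Icc a 1) := by
    refine continuousOn_const.mul (ContinuousOn.rpow_const continuousOn_id ?_)
    intro x hx
    exact Or.inl (ne_of_gt (lt_of_lt_of_le ha hx.1))
  have hint : IntegrableOn (fun x : ℝ => C ^ 2 * x ^ (2 * r)) (Set.Icc a 1) volume :=
    hcont.integrableOn_Icc
  have key : ∫⁻ x in Set.Icc a 1, (‖C * x ^ r‖₊ : ℝ≥0∞) ^ (2:ℝ) ≤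
      ENNReal.ofReal (C ^ 2 * B) := by
    have h1 : ∫⁻ x in Set.Icc a 1, (‖C * x ^ r‖₊ : ℝ≥0∞) ^ (2:ℝ)
        = ∫⁻ x in Set.Icc a 1, ENNReal.ofReal (C ^ 2 * x ^ (2 * r)) := by
      refine setLIntegral_congr_fun measurableSet_Icc ?_
      intro x hx
      have hx0 : (0:ℝ) ≤ x := le_trans ha.le hx.1
      have hnn : (0:ℝ) ≤ C * x ^ r := by positivity
      dsimp only
      rw [← enorm_eq_nnnorm, ← ofReal_norm, Real.norm_eq_abs, abs_of_nonneg hnn,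
        ENNReal.ofReal_rpow_of_nonneg hnn (by norm_num : (0:ℝ) ≤ 2)]
      congr 1
      rw [Real.mul_rpow hC (Real.rpow_nonneg hx0 r), ← Real.rpow_mul hx0,
        mul_comm r 2, Real.rpow_two]
    rw [h1, ← ofReal_integral_eq_lintegral_ofReal hint]
    · refine ENNReal.ofReal_le_ofReal ?_
      rw [MeasureTheory.integral_const_mul]
      exact mul_le_mul_of_nonneg_left hB (sq_nonneg C)
    · filter_upwards [MeasureTheory.ae_restrict_mem measurableSet_Icc] with x hx
      have hx0 : (0:ℝ) ≤ x := le_trans ha.le hx.1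
      positivity
  rw [eLpNorm_eq_lintegral_rpow_enorm_toReal (by norm_num) (by norm_num)]
  simp only [ENNReal.toReal_ofNat, enorm_eq_nnnorm]
  calc (∫⁻ x in Set.Icc a 1, (‖C * x ^ r‖₊ : ℝ≥0∞) ^ (2:ℝ)) ^ (1/2 : ℝ)
      ≤ (ENNReal.ofReal (C ^ 2 * B)) ^ (1/2 : ℝ) :=
        ENNReal.rpow_le_rpow key (by norm_num)
    _ = ENNReal.ofReal (C * Real.sqrt B) := by
        rw [ENNReal.ofReal_rpow_of_nonneg (mul_nonneg (sq_nonneg C) hB0) (by norm_num : (0:ℝ) ≤ 1/2)]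
        congr 1
        congr 1
        rw [← Real.sqrt_eq_rpow, Real.sqrt_mul (sq_nonneg C), Real.sqrt_sq hC]

/-- The preferential attachment kernel `p(x,y) = β (min x y)^{-γ} (max x y)^{γ-1}`. -/
noncomputable def paKernel (β γ : ℝ) (x y : ℝ) : ℝ :=
  β * (min x y) ^ (-γ) * (max x y) ^ (γ - 1)

/-- `L²([a,1])` norm bounds for `f(x) = ∫_a^1 p(x,y) dy` and `g(x) = ∫_0^a p(x,y) dy`
for the preferential attachment kernel, with `c₂ = β(1/γ + 1/(1-γ))`. -/
theorem stmt9 (β γ a : ℝ) (hβ : 0 < β) (hγ : γ ∈ Set.Ioo (1 / 2 : ℝ) 1)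
    (ha : a ∈ Set.Ioo (0 : ℝ) 1) :
    eLpNorm (fun x => ∫ y in Set.Icc a 1, paKernel β γ x y) 2
        (volume.restrict (Set.Icc a 1))
      ≤ ENNReal.ofReal
          ((β * (1 / γ + 1 / (1 - γ))) / Real.sqrt (2 * γ - 1) * a ^ (1 / 2 - γ))
    ∧ eLpNorm (fun x => ∫ y in Set.Icc 0 a, paKernel β γ x y) 2
        (volume.restrict (Set.Icc a 1))
      ≤ ENNReal.ofReal
          (β * Real.sqrt (1 - a ^ (2 * γ - 1)) / ((1 - γ) * Real.sqrt (2 * γ - 1))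
            * a ^ (1 - γ)) := by
  obtain ⟨hγ1, hγ2⟩ := hγ
  obtain ⟨ha1, ha2⟩ := ha
  have hγ0 : (0:ℝ) < γ := by linarith
  have h1γ : (0:ℝ) < 1 - γ := by linarith
  have h2γ : (0:ℝ) < 2 * γ - 1 := by linarith
  have hab : a ≤ 1 := ha2.le
  constructor
  · -- the `f` part
    set C : ℝ := β * (1 / γ + 1 / (1 - γ)) with hCdef
    have hC : 0 ≤ C := by
      refine mul_nonneg hβ.le (add_nonneg ?_ ?_)
      · exact one_div_nonneg.mpr hγ0.le
      · exact one_div_nonneg.mpr h1γ.le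
    set B : ℝ := a ^ ((1:ℝ) - 2 * γ) / (2 * γ - 1) with hBdef
    have hB0 : 0 ≤ B := div_nonneg (Real.rpow_nonneg ha1.le _) h2γ.le
    have hbound : ∀ x ∈ Set.Icc a 1,
        |∫ y in Set.Icc a 1, paKernel β γ x y| ≤ C * x ^ (-γ) := by
      intro x hx
      have hx0 : (0:ℝ) < x := lt_of_lt_of_le ha1 hx.1
      have hx1 : x ≤ 1 := hx.2
      -- dominating function
      set q : ℝ → ℝ := fun y => β * x ^ (-γ) * y ^ (γ - 1) + β * y ^ (-γ) * x ^ (γ - 1)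
        with hqdef
      have hcontq : ContinuousOn q (Set.Icc a 1) := by
        refine ContinuousOn.add ?_ ?_
        · exact continuousOn_const.mul (ContinuousOn.rpow_const continuousOn_id
            fun y hy => Or.inl (ne_of_gt (lt_of_lt_of_le ha1 hy.1)))
        · exact (continuousOn_const.mul (ContinuousOn.rpow_const continuousOn_id
            fun y hy => Or.inl (ne_of_gt (lt_of_lt_of_le ha1 hy.1)))).mul continuousOn_const
      have hcontp : ContinuousOn (fun y => paKernel β γ x y) (Set.Icc a 1) := by
        unfold paKernel
        refine ContinuousOn.mul (continuousOn_const.mul ?_) ?_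
        · exact ContinuousOn.rpow_const (continuous_const.min continuous_id).continuousOn
            fun y hy => Or.inl (ne_of_gt (lt_min hx0 (lt_of_lt_of_le ha1 hy.1)))
        · exact ContinuousOn.rpow_const (continuous_const.max continuous_id).continuousOn
            fun y hy => Or.inl (ne_of_gt (lt_of_lt_of_le hx0 (le_max_left _ _)))
      have hintq : IntegrableOn q (Set.Icc a 1) volume := hcontq.integrableOn_Icc
      have hintp : IntegrableOn (fun y => |paKernel β γ x y|) (Set.Icc a 1) volume :=
        hcontp.abs.integrableOn_Icc
      have hpt : ∀ y ∈ Set.Icc a 1, |paKernel β γ x y| ≤ q y := by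
        intro y hy
        have hy0 : (0:ℝ) < y := lt_of_lt_of_le ha1 hy.1
        have ht1 : (0:ℝ) ≤ β * x ^ (-γ) * y ^ (γ - 1) := by positivity
        have ht2 : (0:ℝ) ≤ β * y ^ (-γ) * x ^ (γ - 1) := by positivity
        rcases le_total x y with h | h
        · rw [show paKernel β γ x y = β * x ^ (-γ) * y ^ (γ - 1) by
            unfold paKernel; rw [min_eq_left h, max_eq_right h]]
          rw [abs_of_nonneg ht1]
          exact le_add_of_nonneg_right ht2
        · rw [show paKernel β γ x y = β * y ^ (-γ) * x ^ (γ - 1) by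
            unfold paKernel; rw [min_eq_right h, max_eq_left h]]
          rw [abs_of_nonneg ht2]
          exact le_add_of_nonneg_left ht1
      have e1 : ∫ y in Set.Icc a 1, y ^ (γ - 1) = (1 - a ^ γ) / γ := by
        rw [int_Icc_rpow hab (Or.inl (by linarith)), show γ - 1 + 1 = γ by ring,
          Real.one_rpow]
      have e2 : ∫ y in Set.Icc a 1, y ^ (-γ) = (1 - a ^ ((1:ℝ) - γ)) / (1 - γ) := by
        rw [int_Icc_rpow hab (Or.inl (by linarith)), show -γ + 1 = 1 - γ by ring,
          Real.one_rpow]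
      have hq_int : ∫ y in Set.Icc a 1, q y
          = β * x ^ (-γ) * ((1 - a ^ γ) / γ)
            + β * x ^ (γ - 1) * ((1 - a ^ ((1:ℝ) - γ)) / (1 - γ)) := by
        have i1 : IntegrableOn (fun y : ℝ => β * x ^ (-γ) * y ^ (γ - 1))
            (Set.Icc a 1) volume := by
          refine ContinuousOn.integrableOn_Icc (continuousOn_const.mul
            (ContinuousOn.rpow_const continuousOn_id
              fun y hy => Or.inl (ne_of_gt (lt_of_lt_of_le ha1 hy.1))))
        have i2 : IntegrableOn (fun y : ℝ => β * y ^ (-γ) * x ^ (γ - 1))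
            (Set.Icc a 1) volume := by
          refine ContinuousOn.integrableOn_Icc ?_
          exact (continuousOn_const.mul (ContinuousOn.rpow_const continuousOn_id
            fun y hy => Or.inl (ne_of_gt (lt_of_lt_of_le ha1 hy.1)))).mul continuousOn_const
        rw [hqdef]
        rw [MeasureTheory.integral_add i1 i2]
        congr 1
        · rw [MeasureTheory.integral_const_mul, e1]
        · have : ∀ y : ℝ, β * y ^ (-γ) * x ^ (γ - 1)
              = (β * x ^ (γ - 1)) * y ^ (-γ) := fun y => by ring
          simp_rw [this]
          rw [MeasureTheory.integral_const_mul, e2]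
      have hxe : x ^ (γ - 1) ≤ x ^ (-γ) :=
        Real.rpow_le_rpow_of_exponent_ge hx0 hx1 (by linarith)
      have hxnn : (0:ℝ) ≤ x ^ (-γ) := Real.rpow_nonneg hx0.le _
      calc |∫ y in Set.Icc a 1, paKernel β γ x y|
          ≤ ∫ y in Set.Icc a 1, |paKernel β γ x y| := by
            have := norm_integral_le_integral_norm (μ := volume.restrict (Set.Icc a 1))
              (fun y => paKernel β γ x y)
            simpa [Real.norm_eq_abs] using this
        _ ≤ ∫ y in Set.Icc a 1, q y :=
            setIntegral_mono_on hintp hintq measurableSet_Icc hpt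
        _ = β * x ^ (-γ) * ((1 - a ^ γ) / γ)
            + β * x ^ (γ - 1) * ((1 - a ^ ((1:ℝ) - γ)) / (1 - γ)) := hq_int
        _ ≤ β * x ^ (-γ) * (1 / γ) + β * x ^ (-γ) * (1 / (1 - γ)) := by
            refine add_le_add ?_ ?_
            · refine mul_le_mul_of_nonneg_left ?_ (by positivity)
              refine (div_le_div_iff_of_pos_right hγ0).mpr ?_
              have := Real.rpow_nonneg ha1.le γ
              linarith
            · refine mul_le_mul (mul_le_mul_of_nonneg_left hxe hβ.le)
                ((div_le_div_iff_of_pos_right h1γ).mpr ?_) (div_nonneg ?_ h1γ.le)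
                (mul_nonneg hβ.le hxnn)
              · have := Real.rpow_nonneg ha1.le ((1:ℝ) - γ)
                linarith
              · have := Real.rpow_le_one ha1.le ha2.le h1γ.le
                linarith
        _ = C * x ^ (-γ) := by rw [hCdef]; ring
    have hB : ∫ x in Set.Icc a 1, x ^ (2 * (-γ)) ≤ B := by
      have e : ∫ x in Set.Icc a 1, x ^ (2 * (-γ))
          = (1 - a ^ ((1:ℝ) - 2 * γ)) / (1 - 2 * γ) := by
        rw [int_Icc_rpow hab (Or.inr ⟨by intro h; rw [mul_comm] at h; nlinarith, by
          rw [Set.uIcc_of_le hab]; exact fun h => absurd h.1 (not_le.mpr ha1)⟩)]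
        rw [show 2 * (-γ) + 1 = 1 - 2 * γ by ring, Real.one_rpow]
      rw [e, show (1 - a ^ ((1:ℝ) - 2 * γ)) / (1 - 2 * γ)
          = (a ^ ((1:ℝ) - 2 * γ) - 1) / (2 * γ - 1) by
        rw [div_eq_div_iff (by linarith) (by linarith)]; ring, hBdef]
      refine (div_le_div_iff_of_pos_right h2γ).mpr ?_
      linarith
    have main := elp_helper ha1 hab _ C (-γ) B hC hB0 hbound hB
    refine main.trans (le_of_eq ?_)
    congr 1
    have hsq : Real.sqrt (a ^ ((1:ℝ) - 2 * γ)) = a ^ ((1:ℝ) / 2 - γ) := by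
      rw [show (1:ℝ) - 2 * γ = (1 / 2 - γ) * 2 by ring, Real.rpow_mul ha1.le,
        Real.rpow_two, Real.sqrt_sq (Real.rpow_nonneg ha1.le _)]
    rw [hBdef, Real.sqrt_div (Real.rpow_nonneg ha1.le _), hsq, hCdef]
    ring
  · -- the `g` part
    set C : ℝ := β * a ^ ((1:ℝ) - γ) / (1 - γ) with hCdef
    have hC : 0 ≤ C :=
      div_nonneg (mul_nonneg hβ.le (Real.rpow_nonneg ha1.le _)) h1γ.le
    have hA1 : a ^ (2 * γ - 1) ≤ 1 := Real.rpow_le_one ha1.le ha2.le h2γ.le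
    set B : ℝ := (1 - a ^ (2 * γ - 1)) / (2 * γ - 1) with hBdef
    have hB0 : 0 ≤ B := div_nonneg (by linarith) h2γ.le
    have hbound : ∀ x ∈ Set.Icc a 1,
        |∫ y in Set.Icc 0 a, paKernel β γ x y| ≤ C * x ^ (γ - 1) := by
      intro x hx
      have hx0 : (0:ℝ) < x := lt_of_lt_of_le ha1 hx.1
      have hgx : ∫ y in Set.Icc 0 a, paKernel β γ x y
          = (β * x ^ (γ - 1)) * (a ^ ((1:ℝ) - γ) / (1 - γ)) := by
        have hcong : Set.EqOn (fun y => paKernel β γ x y)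
            (fun y => (β * x ^ (γ - 1)) * y ^ (-γ)) (Set.Icc 0 a) := by
          intro y hy
          have hyx : y ≤ x := le_trans hy.2 hx.1
          simp only [paKernel]
          rw [min_eq_right hyx, max_eq_left hyx]
          ring
        rw [MeasureTheory.setIntegral_congr_fun measurableSet_Icc hcong,
          MeasureTheory.integral_const_mul,
          int_Icc_rpow ha1.le (Or.inl (by linarith)),
          show -γ + 1 = 1 - γ by ring, Real.zero_rpow h1γ.ne', sub_zero]
      rw [hgx, abs_of_nonneg (by positivity), hCdef]
      exact le_of_eq (by ring)
    have hB : ∫ x in Set.Icc a 1, x ^ (2 * (γ - 1)) ≤ B := by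
      rw [int_Icc_rpow hab (Or.inl (by linarith)),
        show 2 * (γ - 1) + 1 = 2 * γ - 1 by ring, Real.one_rpow, hBdef]
    have main := elp_helper ha1 hab _ C (γ - 1) B hC hB0 hbound hB
    refine main.trans (le_of_eq ?_)
    congr 1
    rw [hBdef, Real.sqrt_div (by linarith : (0:ℝ) ≤ 1 - a ^ (2 * γ - 1)), hCdef]
    have hs : Real.sqrt (2 * γ - 1) ≠ 0 := by
      rw [Real.sqrt_ne_zero' ]; linarith
    field_simp
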